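/- Let α > 2. There exist constants c, C > 0 and N₀ ≥ 1 depending only on α such that the following holds. For N ≥ N₀ and 0 < γ ≤ 1/2, define D̃₁ = [γ/2, γ] × [-√(1+α) γ², √(1+α) γ²] and D̃₂ = [N, N+γ] × [√(1+α) N^{(α+2)/2}, √(1+α) N^{(α+2)/2} + γ²], and set Dᵢ = D̃ᵢ ∪ (-D̃ᵢ). Then for all (ξ₁,η₁) ∈ D₁ and (ξ₂,η₂) ∈ D₂ one has c N^α γ ≤ | |ξ₁+ξ₂|^α(ξ₁+ξ₂) - |ξ₁|^α ξ₁ - |ξ₂|^α ξ₂ | ≤ C N^α γ. -/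

import Mathlib

open scoped Pointwise

/-- Dispersive part of the resonance function:
`Ω¹_α(ξ₁,ξ₂) = |ξ₁+ξ₂|^α(ξ₁+ξ₂) - |ξ₁|^α ξ₁ - |ξ₂|^α ξ₂`. -/
noncomputable def Omega1 (α ξ₁ ξ₂ : ℝ) : ℝ :=
  |ξ₁ + ξ₂| ^ α * (ξ₁ + ξ₂) - |ξ₁| ^ α * ξ₁ - |ξ₂| ^ α * ξ₂

/-- `D̃₁ = [γ/2, γ] × [-√(1+α) γ², √(1+α) γ²]`. -/
noncomputable def Dtilde1 (α γ : ℝ) : Set (ℝ × ℝ) :=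
  Set.Icc (γ / 2) γ ×ˢ
    Set.Icc (-(Real.sqrt (1 + α) * γ ^ 2)) (Real.sqrt (1 + α) * γ ^ 2)

/-- `D̃₂ = [N, N+γ] × [√(1+α) N^{(α+2)/2}, √(1+α) N^{(α+2)/2} + γ²]`. -/
noncomputable def Dtilde2 (α N γ : ℝ) : Set (ℝ × ℝ) :=
  Set.Icc N (N + γ) ×ˢ
    Set.Icc (Real.sqrt (1 + α) * N ^ ((α + 2) / 2))
      (Real.sqrt (1 + α) * N ^ ((α + 2) / 2) + γ ^ 2)

lemma rpow_sub_bounds {p a b : ℝ} (hp : 1 ≤ p) (ha : 0 < a) (hab : a ≤ b) :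
    p * a ^ (p - 1) * (b - a) ≤ b ^ p - a ^ p ∧
      b ^ p - a ^ p ≤ p * b ^ (p - 1) * (b - a) := by
  have hb : 0 < b := ha.trans_le hab
  have hcont : ContinuousOn (fun x : ℝ => x ^ p) (Set.Icc a b) :=
    (Real.continuous_rpow_const (le_trans zero_le_one hp)).continuousOn
  have hdiff : DifferentiableOn ℝ (fun x : ℝ => x ^ p) (interior (Set.Icc a b)) :=
    (Real.differentiable_rpow_const hp).differentiableOn
  constructor
  · have := (convex_Icc a b).mul_sub_le_image_sub_of_le_deriv hcont hdiff
      (C := p * a ^ (p - 1)) ?_ a (Set.left_mem_Icc.2 hab) b (Set.right_mem_Icc.2 hab) hab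
    · exact this
    · intro x hx
      rw [interior_Icc] at hx
      rw [Real.deriv_rpow_const x p]
      exact mul_le_mul_of_nonneg_left
        (Real.rpow_le_rpow ha.le hx.1.le (by linarith)) (by linarith)
  · have := (convex_Icc a b).image_sub_le_mul_sub_of_deriv_le hcont hdiff
      (C := p * b ^ (p - 1)) ?_ a (Set.left_mem_Icc.2 hab) b (Set.right_mem_Icc.2 hab) hab
    · exact this
    · intro x hx
      rw [interior_Icc] at hx
      rw [Real.deriv_rpow_const x p]
      exact mul_le_mul_of_nonneg_left
        (Real.rpow_le_rpow (ha.trans hx.1).le hx.2.le (by linarith)) (by linarith)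

lemma omega1_neg_neg (α ξ₁ ξ₂ : ℝ) : Omega1 α (-ξ₁) (-ξ₂) = -Omega1 α ξ₁ ξ₂ := by
  simp only [Omega1, ← neg_add, abs_neg]
  ring

lemma key_bounds (α : ℝ) (hα : 2 < α) (N γ : ℝ) (hN : 1 ≤ N) (hγ : 0 < γ)
    (hγ2 : γ ≤ 1 / 2) (ξ₁ ξ₂ : ℝ) (h1 : ξ₁ ∈ Set.Icc (γ / 2) γ)
    (h2 : ξ₂ ∈ Set.Icc N (N + γ) ∨ ξ₂ ∈ Set.Icc (-(N + γ)) (-N)) :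
    min 1 ((α - 1) / (2 * (2 : ℝ) ^ α)) * N ^ α * γ ≤ |Omega1 α ξ₁ ξ₂| ∧
      |Omega1 α ξ₁ ξ₂| ≤ ((α + 1) * (2 : ℝ) ^ α + 1) * N ^ α * γ := by
  obtain ⟨h1l, h1r⟩ := h1
  have hξ₁ : 0 < ξ₁ := lt_of_lt_of_le (by linarith) h1l
  have hN0 : (0 : ℝ) < N := by linarith
  set P := N ^ α with hPdef
  set q := (2 : ℝ) ^ α with hqdef
  set r := γ ^ α with hrdef
  have hP1 : 1 ≤ P := Real.one_le_rpow hN (by linarith)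
  have hP0 : 0 < P := by linarith
  have hq4 : (4 : ℝ) ≤ q := by
    have h4 : ((2 : ℝ) ^ (2 : ℝ)) = 4 := by
      rw [show (2 : ℝ) = ((2 : ℕ) : ℝ) by norm_num, Real.rpow_natCast]; norm_num
    calc (4 : ℝ) = (2 : ℝ) ^ (2 : ℝ) := h4.symm
      _ ≤ q := Real.rpow_le_rpow_of_exponent_le (by norm_num) hα.le
  have hq0 : (0 : ℝ) < q := by linarith
  have hr0 : 0 ≤ r := Real.rpow_nonneg hγ.le α
  have hrq : r * q ≤ 1 := by
    have hhalf : r ≤ (1 / 2 : ℝ) ^ α := Real.rpow_le_rpow hγ.le hγ2 (by linarith)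
    have h1 : (1 / 2 : ℝ) ^ α * q = 1 := by
      rw [hqdef, ← Real.mul_rpow (by norm_num) (by norm_num)]
      norm_num
    nlinarith
  have hr14 : r ≤ 1 / 4 := by nlinarith
  have hξ₁p : ξ₁ ^ (α + 1) ≤ r * γ := by
    rw [Real.rpow_add_one hξ₁.ne']
    exact mul_le_mul (Real.rpow_le_rpow hξ₁.le h1r (by linarith)) h1r hξ₁.le hr0
  have hξ₁p0 : 0 ≤ ξ₁ ^ (α + 1) := Real.rpow_nonneg hξ₁.le _
  have hξ₁pγ : ξ₁ ^ (α + 1) ≤ γ / 4 := by nlinarith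
  have hp1 : (1 : ℝ) ≤ α + 1 := by linarith
  have hmin1 : min 1 ((α - 1) / (2 * q)) ≤ 1 := min_le_left _ _
  have hmin2 : min 1 ((α - 1) / (2 * q)) ≤ (α - 1) / (2 * q) := min_le_right _ _
  have hB1 : γ ≤ P * γ := le_mul_of_one_le_left hγ.le hP1
  have hqPγ : 0 ≤ q * P * γ := by positivity
  have hαqPγ : 0 ≤ α * (q * P * γ) := by nlinarith
  rcases h2 with ⟨h2l, h2r⟩ | ⟨h2l, h2r⟩
  · -- Case A : ξ₂ ∈ [N, N+γ]
    have hξ₂ : 0 < ξ₂ := by linarith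
    have hsum : 0 < ξ₁ + ξ₂ := by linarith
    have e : Omega1 α ξ₁ ξ₂ =
        ((ξ₁ + ξ₂) ^ (α + 1) - ξ₂ ^ (α + 1)) - ξ₁ ^ (α + 1) := by
      simp only [Omega1, abs_of_pos hξ₁, abs_of_pos hξ₂, abs_of_pos hsum,
        Real.rpow_add_one hξ₁.ne', Real.rpow_add_one hξ₂.ne',
        Real.rpow_add_one hsum.ne']
      ring
    obtain ⟨hlow, hhigh⟩ := rpow_sub_bounds hp1 hξ₂ (by linarith : ξ₂ ≤ ξ₁ + ξ₂)
    rw [show α + 1 - 1 = α by ring, show ξ₁ + ξ₂ - ξ₂ = ξ₁ by ring] at hlow hhigh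
    have hb1 : P ≤ ξ₂ ^ α := Real.rpow_le_rpow hN0.le h2l (by linarith)
    have hb2 : (ξ₁ + ξ₂) ^ α ≤ q * P := by
      have h2N : (ξ₁ + ξ₂) ^ α ≤ (2 * N) ^ α :=
        Real.rpow_le_rpow (by linarith) (by linarith) (by linarith)
      rwa [Real.mul_rpow (by norm_num) hN0.le] at h2N
    have hA1 : (α + 1) * P * (γ / 2) ≤ (α + 1) * ξ₂ ^ α * ξ₁ :=
      mul_le_mul (mul_le_mul_of_nonneg_left hb1 (by linarith)) h1l (by linarith)
        (by positivity)
    have hA2 : (α + 1) * (ξ₁ + ξ₂) ^ α * ξ₁ ≤ (α + 1) * (q * P) * γ :=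
      mul_le_mul (mul_le_mul_of_nonneg_left hb2 (by linarith)) h1r hξ₁.le
        (by positivity)
    have hD0 : 0 ≤ (ξ₁ + ξ₂) ^ (α + 1) - ξ₂ ^ (α + 1) := by
      have := mul_nonneg (mul_nonneg (by linarith : (0:ℝ) ≤ α + 1)
        (Real.rpow_nonneg hξ₂.le α)) hξ₁.le
      linarith
    have hB2 : 3 * (P * γ) ≤ (α + 1) * (P * γ) :=
      mul_le_mul_of_nonneg_right (by linarith) (by positivity)
    have main : P * γ ≤ (α + 1) * ξ₂ ^ α * ξ₁ - ξ₁ ^ (α + 1) := by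
      linarith [hA1, hξ₁pγ, hB1, hB2]
    have hm : min 1 ((α - 1) / (2 * q)) * P * γ ≤ 1 * P * γ :=
      mul_le_mul_of_nonneg_right (mul_le_mul_of_nonneg_right hmin1 hP0.le) hγ.le
    constructor
    · calc min 1 ((α - 1) / (2 * q)) * P * γ ≤ 1 * P * γ := hm
        _ ≤ (α + 1) * ξ₂ ^ α * ξ₁ - ξ₁ ^ (α + 1) := by linarith
        _ ≤ Omega1 α ξ₁ ξ₂ := by rw [e]; linarith
        _ ≤ |Omega1 α ξ₁ ξ₂| := le_abs_self _
    · rw [e, abs_le]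
      constructor
      · linarith [hD0, hξ₁pγ, hB1, hqPγ, hαqPγ, hγ.le]
      · linarith [hhigh, hA2, hξ₁p0, (mul_pos hP0 hγ).le]
  · -- Case B : ξ₂ ∈ [-(N+γ), -N]
    set m := -ξ₂ with hm
    have hmN : N ≤ m := by rw [hm]; linarith
    have hmN' : m ≤ N + γ := by rw [hm]; linarith
    have hm0 : 0 < m := by linarith
    have ha0 : 0 < m - ξ₁ := by linarith
    have e : Omega1 α ξ₁ ξ₂ =
        (m ^ (α + 1) - (m - ξ₁) ^ (α + 1)) - ξ₁ ^ (α + 1) := by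
      have h1' : ξ₁ + ξ₂ = -(m - ξ₁) := by rw [hm]; ring
      have h2' : ξ₂ = -m := by rw [hm]; ring
      simp only [Omega1]
      rw [h1', abs_neg, abs_of_pos ha0, h2', abs_neg, abs_of_pos hm0,
        abs_of_pos hξ₁, Real.rpow_add_one hξ₁.ne', Real.rpow_add_one hm0.ne',
        Real.rpow_add_one ha0.ne']
      ring
    obtain ⟨hlow, hhigh⟩ := rpow_sub_bounds hp1 ha0 (by linarith : m - ξ₁ ≤ m)
    rw [show α + 1 - 1 = α by ring, show m - (m - ξ₁) = ξ₁ by ring] at hlow hhigh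
    set s := (N / 2) ^ α with hsdef
    have hs0 : 0 < s := Real.rpow_pos_of_pos (by linarith) α
    have hsq : s * q = P := by
      rw [hsdef, hqdef, hPdef, ← Real.mul_rpow (by linarith) (by norm_num)]
      norm_num
    have hb1 : s ≤ (m - ξ₁) ^ α :=
      Real.rpow_le_rpow (by linarith) (by linarith) (by linarith)
    have hb2 : m ^ α ≤ q * P := by
      have h2N : m ^ α ≤ (2 * N) ^ α :=
        Real.rpow_le_rpow hm0.le (by linarith) (by linarith)
      rwa [Real.mul_rpow (by norm_num) hN0.le] at h2N
    have hsr : r ≤ s := by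
      have : r * q ≤ s * q := by rw [hsq]; linarith
      exact le_of_mul_le_mul_right this hq0
    have hA1 : (α + 1) * s * (γ / 2) ≤ (α + 1) * (m - ξ₁) ^ α * ξ₁ :=
      mul_le_mul (mul_le_mul_of_nonneg_left hb1 (by linarith)) h1l (by linarith)
        (by positivity)
    have hA2 : (α + 1) * m ^ α * ξ₁ ≤ (α + 1) * (q * P) * γ :=
      mul_le_mul (mul_le_mul_of_nonneg_left hb2 (by linarith)) h1r hξ₁.le
        (by positivity)
    have hξ₁ps : ξ₁ ^ (α + 1) ≤ s * γ := by
      calc ξ₁ ^ (α + 1) ≤ r * γ := hξ₁p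
        _ ≤ s * γ := mul_le_mul_of_nonneg_right hsr hγ.le
    have hD0 : 0 ≤ m ^ (α + 1) - (m - ξ₁) ^ (α + 1) := by
      have := mul_nonneg (mul_nonneg (by linarith : (0:ℝ) ≤ α + 1)
        (Real.rpow_nonneg ha0.le α)) hξ₁.le
      linarith
    constructor
    · have hmm : min 1 ((α - 1) / (2 * q)) * (s * q * γ) ≤
          (α - 1) / (2 * q) * (s * q * γ) :=
        mul_le_mul_of_nonneg_right hmin2 (by positivity)
      have heq : (α - 1) / (2 * q) * (s * q * γ) = (α - 1) * s * γ / 2 := by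
        field_simp
      rw [heq] at hmm
      have main : (α - 1) * s * γ / 2 ≤
          (α + 1) * (m - ξ₁) ^ α * ξ₁ - ξ₁ ^ (α + 1) := by
        linarith [hA1, hξ₁ps]
      calc min 1 ((α - 1) / (2 * q)) * P * γ
          = min 1 ((α - 1) / (2 * q)) * (s * q * γ) := by rw [← hsq]; ring
        _ ≤ (α - 1) * s * γ / 2 := hmm
        _ ≤ (α + 1) * (m - ξ₁) ^ α * ξ₁ - ξ₁ ^ (α + 1) := main
        _ ≤ Omega1 α ξ₁ ξ₂ := by rw [e]; linarith
        _ ≤ |Omega1 α ξ₁ ξ₂| := le_abs_self _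
    · rw [e, abs_le]
      constructor
      · linarith [hD0, hξ₁pγ, hB1, hqPγ, hαqPγ, hγ.le]
      · linarith [hhigh, hA2, hξ₁p0, (mul_pos hP0 hγ).le]

/-- size of the dispersive part `Ω¹_α` of the resonance function on
`D₁ × D₂` with `Dᵢ = D̃ᵢ ∪ (-D̃ᵢ)`: it is comparable to `N^α γ`. -/
theorem statement2 (α : ℝ) (hα : 2 < α) :
    ∃ c C N₀ : ℝ, 0 < c ∧ 0 < C ∧ 1 ≤ N₀ ∧
      ∀ N γ : ℝ, N₀ ≤ N → 0 < γ → γ ≤ 1 / 2 →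
        ∀ ξ₁ η₁ ξ₂ η₂ : ℝ,
          (ξ₁, η₁) ∈ Dtilde1 α γ ∪ -Dtilde1 α γ →
          (ξ₂, η₂) ∈ Dtilde2 α N γ ∪ -Dtilde2 α N γ →
          c * N ^ α * γ ≤ |Omega1 α ξ₁ ξ₂| ∧ |Omega1 α ξ₁ ξ₂| ≤ C * N ^ α * γ := by
  refine ⟨min 1 ((α - 1) / (2 * (2 : ℝ) ^ α)), (α + 1) * (2 : ℝ) ^ α + 1, 1,
    lt_min one_pos (div_pos (by linarith) (by positivity)),
    by nlinarith [Real.rpow_pos_of_pos (show (0:ℝ) < 2 by norm_num) α], le_refl 1, ?_⟩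
  intro N γ hN hγ hγ2 ξ₁ η₁ ξ₂ η₂ hD1 hD2
  have h1 : ξ₁ ∈ Set.Icc (γ / 2) γ ∨ -ξ₁ ∈ Set.Icc (γ / 2) γ := by
    rcases hD1 with h | h
    · exact Or.inl (Set.mem_prod.1 h).1
    · rw [Set.mem_neg] at h
      exact Or.inr (Set.mem_prod.1 h).1
  have h2 : ξ₂ ∈ Set.Icc N (N + γ) ∨ -ξ₂ ∈ Set.Icc N (N + γ) := by
    rcases hD2 with h | h
    · exact Or.inl (Set.mem_prod.1 h).1
    · rw [Set.mem_neg] at h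
      exact Or.inr (Set.mem_prod.1 h).1
  rcases h1 with h1 | h1
  · rcases h2 with h2 | h2
    · exact key_bounds α hα N γ hN hγ hγ2 ξ₁ ξ₂ h1 (Or.inl h2)
    · refine key_bounds α hα N γ hN hγ hγ2 ξ₁ ξ₂ h1 (Or.inr ?_)
      obtain ⟨ha, hb⟩ := h2
      exact ⟨by linarith, by linarith⟩
  · rcases h2 with h2 | h2
    · have := key_bounds α hα N γ hN hγ hγ2 (-ξ₁) (-ξ₂) h1
        (Or.inr ⟨by obtain ⟨ha, hb⟩ := h2; linarith, by obtain ⟨ha, hb⟩ := h2; linarith⟩)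
      rwa [omega1_neg_neg, abs_neg] at this
    · have := key_bounds α hα N γ hN hγ hγ2 (-ξ₁) (-ξ₂) h1 (Or.inl h2)
      rwa [omega1_neg_neg, abs_neg] at this
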